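/- Suppose {n_{ab}} (a ≠ b ∈ {0,…,4}) are vectors in ℝ³ ≅ su(2), {X^±_a} ⊂ SU(2) satisfy the orientation constraint Ad_{X^+_a}(n_{ab}) = −Ad_{X^+_b}(n_{ba}) and Ad_{X^-_a}(n_{ab}) = −Ad_{X^-_b}(n_{ba}), and X^+_a = ε_a Y X^-_a for signs ε_a and a fixed Y ∈ SU(2). Then the Spin(4)-bivectors B_{ab} := (A_{ab}/2)(−Ad_{X^-_a}(n_{ab}), Ad_{X^+_a}(n_{ab})) (with A_{ab} = A_{ba} > 0) satisfy: there exists a fixed unit vector N ∈ ℝ⁴ such that (⋆B_{ab})^{IJ}N_J = 0 for all a ≠ b, where B_{ab} is regarded as an element of so(4) via the identification with su(2)⊕su(2). -/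
import Mathlib


noncomputable section
open scoped BigOperators

/-- Sign of an integer, as a real number. -/
def sgnZ (x : ℤ) : ℝ := if 0 < x then 1 else if x < 0 then -1 else 0

/-- Levi-Civita symbol ε_{IJKL} on ℝ⁴, with ε_{0123} = 1. -/
def eps4 (a b c d : Fin 4) : ℝ :=
  sgnZ ((b:ℤ) - a) * sgnZ ((c:ℤ) - a) * sgnZ ((d:ℤ) - a) *
  sgnZ ((c:ℤ) - b) * sgnZ ((d:ℤ) - b) * sgnZ ((d:ℤ) - c)

/-- Levi-Civita symbol on indices 1,2,3 (here `Fin 3`). -/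
def eps3 (a b c : Fin 3) : ℝ := sgnZ ((b:ℤ) - a) * sgnZ ((c:ℤ) - a) * sgnZ ((c:ℤ) - b)

/-- Antisymmetry of a 4×4 real array. -/
def Antisym (B : Fin 4 → Fin 4 → ℝ) : Prop := ∀ I J, B I J = - B J I

/-- Self-dual part B_+^i = (1/4) ε^i_{jk} B^{jk} + (1/2) B^{0i}. -/
def Bplus (B : Fin 4 → Fin 4 → ℝ) (i : Fin 3) : ℝ :=
  (1/4) * ∑ j, ∑ k, eps3 i j k * B j.succ k.succ + (1/2) * B 0 i.succ

/-- Anti-self-dual part B_-^i = (1/4) ε^i_{jk} B^{jk} - (1/2) B^{0i}. -/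
def Bminus (B : Fin 4 → Fin 4 → ℝ) (i : Fin 3) : ℝ :=
  (1/4) * ∑ j, ∑ k, eps3 i j k * B j.succ k.succ - (1/2) * B 0 i.succ

/-- Hodge dual (⋆B)^{IJ} = (1/2) ε^{IJ}_{KL} B^{KL} (Euclidean metric). -/
def hodge (B : Fin 4 → Fin 4 → ℝ) (I J : Fin 4) : ℝ :=
  (1/2) * ∑ K, ∑ L, eps4 I J K L * B K L

open Matrix

/-- The inverse of the iso so(4) ≅ su(2)⊕su(2):
J^{ij} = ε^{ij}_k (J_+^k + J_-^k), J^{0i} = J_+^i - J_-^i. -/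
def fromSD (Jm Jp : Fin 3 → ℝ) (I K : Fin 4) : ℝ :=
  if hI : I = 0 then
    (if hK : K = 0 then 0 else Jp (K.pred hK) - Jm (K.pred hK))
  else if hK : K = 0 then -(Jp (I.pred hI) - Jm (I.pred hI))
  else ∑ l, eps3 (I.pred hI) (K.pred hK) l * (Jp l + Jm l)

/-- SU(2): 2×2 special unitary matrices. -/
def SU2 := Matrix.specialUnitaryGroup (Fin 2) ℂ

/-- The su(2) basis τ^i = (−i/2)σ^i built from the Pauli matrices. -/
def tau : Fin 3 → Matrix (Fin 2) (Fin 2) ℂ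
  | 0 => (-(Complex.I)/2) • !![0, 1; 1, 0]
  | 1 => (-(Complex.I)/2) • !![0, -Complex.I; Complex.I, 0]
  | 2 => (-(Complex.I)/2) • !![1, 0; 0, -1]

/-- The identification ℝ³ ≅ su(2), v ↦ v^i τ_i. -/
def mmat (v : Fin 3 → ℝ) : Matrix (Fin 2) (Fin 2) ℂ := ∑ i, (v i : ℂ) • tau i

lemma hfsd00 (Jm Jp : Fin 3 → ℝ) : hodge (fromSD Jm Jp) 0 0 = 0 := by
  norm_num (config := { decide := true }) [hodge, fromSD, eps4, eps3, sgnZ, Fin.sum_univ_four, Fin.sum_univ_three,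
    show ((0:Fin 4):ℤ) = 0 from rfl, show ((1:Fin 4):ℤ) = 1 from rfl,
    show ((2:Fin 4):ℤ) = 2 from rfl, show ((3:Fin 4):ℤ) = 3 from rfl,
    show ((0:Fin 3):ℤ) = 0 from rfl, show ((1:Fin 3):ℤ) = 1 from rfl,
    show ((2:Fin 3):ℤ) = 2 from rfl,
    (by decide : ¬(1:Fin 4) = 0), (by decide : ¬(2:Fin 4) = 0), (by decide : ¬(3:Fin 4) = 0),
    show ∀ h, Fin.pred (1:Fin 4) h = (0:Fin 3) from fun _ => rfl,
    show ∀ h, Fin.pred (2:Fin 4) h = (1:Fin 3) from fun _ => rfl,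
    show ∀ h, Fin.pred (3:Fin 4) h = (2:Fin 3) from fun _ => rfl] <;> ring

lemma hfsd01 (Jm Jp : Fin 3 → ℝ) : hodge (fromSD Jm Jp) 0 1 = Jp 0 + Jm 0 := by
  norm_num (config := { decide := true }) [hodge, fromSD, eps4, eps3, sgnZ, Fin.sum_univ_four, Fin.sum_univ_three,
    show ((0:Fin 4):ℤ) = 0 from rfl, show ((1:Fin 4):ℤ) = 1 from rfl,
    show ((2:Fin 4):ℤ) = 2 from rfl, show ((3:Fin 4):ℤ) = 3 from rfl,
    show ((0:Fin 3):ℤ) = 0 from rfl, show ((1:Fin 3):ℤ) = 1 from rfl,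
    show ((2:Fin 3):ℤ) = 2 from rfl,
    (by decide : ¬(1:Fin 4) = 0), (by decide : ¬(2:Fin 4) = 0), (by decide : ¬(3:Fin 4) = 0),
    show ∀ h, Fin.pred (1:Fin 4) h = (0:Fin 3) from fun _ => rfl,
    show ∀ h, Fin.pred (2:Fin 4) h = (1:Fin 3) from fun _ => rfl,
    show ∀ h, Fin.pred (3:Fin 4) h = (2:Fin 3) from fun _ => rfl] <;> ring

lemma hfsd02 (Jm Jp : Fin 3 → ℝ) : hodge (fromSD Jm Jp) 0 2 = Jp 1 + Jm 1 := by
  norm_num (config := { decide := true }) [hodge, fromSD, eps4, eps3, sgnZ, Fin.sum_univ_four, Fin.sum_univ_three,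
    show ((0:Fin 4):ℤ) = 0 from rfl, show ((1:Fin 4):ℤ) = 1 from rfl,
    show ((2:Fin 4):ℤ) = 2 from rfl, show ((3:Fin 4):ℤ) = 3 from rfl,
    show ((0:Fin 3):ℤ) = 0 from rfl, show ((1:Fin 3):ℤ) = 1 from rfl,
    show ((2:Fin 3):ℤ) = 2 from rfl,
    (by decide : ¬(1:Fin 4) = 0), (by decide : ¬(2:Fin 4) = 0), (by decide : ¬(3:Fin 4) = 0),
    show ∀ h, Fin.pred (1:Fin 4) h = (0:Fin 3) from fun _ => rfl,
    show ∀ h, Fin.pred (2:Fin 4) h = (1:Fin 3) from fun _ => rfl,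
    show ∀ h, Fin.pred (3:Fin 4) h = (2:Fin 3) from fun _ => rfl] <;> ring

lemma hfsd03 (Jm Jp : Fin 3 → ℝ) : hodge (fromSD Jm Jp) 0 3 = Jp 2 + Jm 2 := by
  norm_num (config := { decide := true }) [hodge, fromSD, eps4, eps3, sgnZ, Fin.sum_univ_four, Fin.sum_univ_three,
    show ((0:Fin 4):ℤ) = 0 from rfl, show ((1:Fin 4):ℤ) = 1 from rfl,
    show ((2:Fin 4):ℤ) = 2 from rfl, show ((3:Fin 4):ℤ) = 3 from rfl,
    show ((0:Fin 3):ℤ) = 0 from rfl, show ((1:Fin 3):ℤ) = 1 from rfl,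
    show ((2:Fin 3):ℤ) = 2 from rfl,
    (by decide : ¬(1:Fin 4) = 0), (by decide : ¬(2:Fin 4) = 0), (by decide : ¬(3:Fin 4) = 0),
    show ∀ h, Fin.pred (1:Fin 4) h = (0:Fin 3) from fun _ => rfl,
    show ∀ h, Fin.pred (2:Fin 4) h = (1:Fin 3) from fun _ => rfl,
    show ∀ h, Fin.pred (3:Fin 4) h = (2:Fin 3) from fun _ => rfl] <;> ring

lemma hfsd10 (Jm Jp : Fin 3 → ℝ) : hodge (fromSD Jm Jp) 1 0 = -(Jp 0 + Jm 0) := by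
  norm_num (config := { decide := true }) [hodge, fromSD, eps4, eps3, sgnZ, Fin.sum_univ_four, Fin.sum_univ_three,
    show ((0:Fin 4):ℤ) = 0 from rfl, show ((1:Fin 4):ℤ) = 1 from rfl,
    show ((2:Fin 4):ℤ) = 2 from rfl, show ((3:Fin 4):ℤ) = 3 from rfl,
    show ((0:Fin 3):ℤ) = 0 from rfl, show ((1:Fin 3):ℤ) = 1 from rfl,
    show ((2:Fin 3):ℤ) = 2 from rfl,
    (by decide : ¬(1:Fin 4) = 0), (by decide : ¬(2:Fin 4) = 0), (by decide : ¬(3:Fin 4) = 0),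
    show ∀ h, Fin.pred (1:Fin 4) h = (0:Fin 3) from fun _ => rfl,
    show ∀ h, Fin.pred (2:Fin 4) h = (1:Fin 3) from fun _ => rfl,
    show ∀ h, Fin.pred (3:Fin 4) h = (2:Fin 3) from fun _ => rfl] <;> ring

lemma hfsd11 (Jm Jp : Fin 3 → ℝ) : hodge (fromSD Jm Jp) 1 1 = 0 := by
  norm_num (config := { decide := true }) [hodge, fromSD, eps4, eps3, sgnZ, Fin.sum_univ_four, Fin.sum_univ_three,
    show ((0:Fin 4):ℤ) = 0 from rfl, show ((1:Fin 4):ℤ) = 1 from rfl,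
    show ((2:Fin 4):ℤ) = 2 from rfl, show ((3:Fin 4):ℤ) = 3 from rfl,
    show ((0:Fin 3):ℤ) = 0 from rfl, show ((1:Fin 3):ℤ) = 1 from rfl,
    show ((2:Fin 3):ℤ) = 2 from rfl,
    (by decide : ¬(1:Fin 4) = 0), (by decide : ¬(2:Fin 4) = 0), (by decide : ¬(3:Fin 4) = 0),
    show ∀ h, Fin.pred (1:Fin 4) h = (0:Fin 3) from fun _ => rfl,
    show ∀ h, Fin.pred (2:Fin 4) h = (1:Fin 3) from fun _ => rfl,
    show ∀ h, Fin.pred (3:Fin 4) h = (2:Fin 3) from fun _ => rfl] <;> ring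

lemma hfsd12 (Jm Jp : Fin 3 → ℝ) : hodge (fromSD Jm Jp) 1 2 = Jp 2 - Jm 2 := by
  norm_num (config := { decide := true }) [hodge, fromSD, eps4, eps3, sgnZ, Fin.sum_univ_four, Fin.sum_univ_three,
    show ((0:Fin 4):ℤ) = 0 from rfl, show ((1:Fin 4):ℤ) = 1 from rfl,
    show ((2:Fin 4):ℤ) = 2 from rfl, show ((3:Fin 4):ℤ) = 3 from rfl,
    show ((0:Fin 3):ℤ) = 0 from rfl, show ((1:Fin 3):ℤ) = 1 from rfl,
    show ((2:Fin 3):ℤ) = 2 from rfl,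
    (by decide : ¬(1:Fin 4) = 0), (by decide : ¬(2:Fin 4) = 0), (by decide : ¬(3:Fin 4) = 0),
    show ∀ h, Fin.pred (1:Fin 4) h = (0:Fin 3) from fun _ => rfl,
    show ∀ h, Fin.pred (2:Fin 4) h = (1:Fin 3) from fun _ => rfl,
    show ∀ h, Fin.pred (3:Fin 4) h = (2:Fin 3) from fun _ => rfl] <;> ring

lemma hfsd13 (Jm Jp : Fin 3 → ℝ) : hodge (fromSD Jm Jp) 1 3 = -(Jp 1 - Jm 1) := by
  norm_num (config := { decide := true }) [hodge, fromSD, eps4, eps3, sgnZ, Fin.sum_univ_four, Fin.sum_univ_three,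
    show ((0:Fin 4):ℤ) = 0 from rfl, show ((1:Fin 4):ℤ) = 1 from rfl,
    show ((2:Fin 4):ℤ) = 2 from rfl, show ((3:Fin 4):ℤ) = 3 from rfl,
    show ((0:Fin 3):ℤ) = 0 from rfl, show ((1:Fin 3):ℤ) = 1 from rfl,
    show ((2:Fin 3):ℤ) = 2 from rfl,
    (by decide : ¬(1:Fin 4) = 0), (by decide : ¬(2:Fin 4) = 0), (by decide : ¬(3:Fin 4) = 0),
    show ∀ h, Fin.pred (1:Fin 4) h = (0:Fin 3) from fun _ => rfl,
    show ∀ h, Fin.pred (2:Fin 4) h = (1:Fin 3) from fun _ => rfl,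
    show ∀ h, Fin.pred (3:Fin 4) h = (2:Fin 3) from fun _ => rfl] <;> ring

lemma hfsd20 (Jm Jp : Fin 3 → ℝ) : hodge (fromSD Jm Jp) 2 0 = -(Jp 1 + Jm 1) := by
  norm_num (config := { decide := true }) [hodge, fromSD, eps4, eps3, sgnZ, Fin.sum_univ_four, Fin.sum_univ_three,
    show ((0:Fin 4):ℤ) = 0 from rfl, show ((1:Fin 4):ℤ) = 1 from rfl,
    show ((2:Fin 4):ℤ) = 2 from rfl, show ((3:Fin 4):ℤ) = 3 from rfl,
    show ((0:Fin 3):ℤ) = 0 from rfl, show ((1:Fin 3):ℤ) = 1 from rfl,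
    show ((2:Fin 3):ℤ) = 2 from rfl,
    (by decide : ¬(1:Fin 4) = 0), (by decide : ¬(2:Fin 4) = 0), (by decide : ¬(3:Fin 4) = 0),
    show ∀ h, Fin.pred (1:Fin 4) h = (0:Fin 3) from fun _ => rfl,
    show ∀ h, Fin.pred (2:Fin 4) h = (1:Fin 3) from fun _ => rfl,
    show ∀ h, Fin.pred (3:Fin 4) h = (2:Fin 3) from fun _ => rfl] <;> ring

lemma hfsd21 (Jm Jp : Fin 3 → ℝ) : hodge (fromSD Jm Jp) 2 1 = -(Jp 2 - Jm 2) := by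
  norm_num (config := { decide := true }) [hodge, fromSD, eps4, eps3, sgnZ, Fin.sum_univ_four, Fin.sum_univ_three,
    show ((0:Fin 4):ℤ) = 0 from rfl, show ((1:Fin 4):ℤ) = 1 from rfl,
    show ((2:Fin 4):ℤ) = 2 from rfl, show ((3:Fin 4):ℤ) = 3 from rfl,
    show ((0:Fin 3):ℤ) = 0 from rfl, show ((1:Fin 3):ℤ) = 1 from rfl,
    show ((2:Fin 3):ℤ) = 2 from rfl,
    (by decide : ¬(1:Fin 4) = 0), (by decide : ¬(2:Fin 4) = 0), (by decide : ¬(3:Fin 4) = 0),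
    show ∀ h, Fin.pred (1:Fin 4) h = (0:Fin 3) from fun _ => rfl,
    show ∀ h, Fin.pred (2:Fin 4) h = (1:Fin 3) from fun _ => rfl,
    show ∀ h, Fin.pred (3:Fin 4) h = (2:Fin 3) from fun _ => rfl] <;> ring

lemma hfsd22 (Jm Jp : Fin 3 → ℝ) : hodge (fromSD Jm Jp) 2 2 = 0 := by
  norm_num (config := { decide := true }) [hodge, fromSD, eps4, eps3, sgnZ, Fin.sum_univ_four, Fin.sum_univ_three,
    show ((0:Fin 4):ℤ) = 0 from rfl, show ((1:Fin 4):ℤ) = 1 from rfl,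
    show ((2:Fin 4):ℤ) = 2 from rfl, show ((3:Fin 4):ℤ) = 3 from rfl,
    show ((0:Fin 3):ℤ) = 0 from rfl, show ((1:Fin 3):ℤ) = 1 from rfl,
    show ((2:Fin 3):ℤ) = 2 from rfl,
    (by decide : ¬(1:Fin 4) = 0), (by decide : ¬(2:Fin 4) = 0), (by decide : ¬(3:Fin 4) = 0),
    show ∀ h, Fin.pred (1:Fin 4) h = (0:Fin 3) from fun _ => rfl,
    show ∀ h, Fin.pred (2:Fin 4) h = (1:Fin 3) from fun _ => rfl,
    show ∀ h, Fin.pred (3:Fin 4) h = (2:Fin 3) from fun _ => rfl] <;> ring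

lemma hfsd23 (Jm Jp : Fin 3 → ℝ) : hodge (fromSD Jm Jp) 2 3 = Jp 0 - Jm 0 := by
  norm_num (config := { decide := true }) [hodge, fromSD, eps4, eps3, sgnZ, Fin.sum_univ_four, Fin.sum_univ_three,
    show ((0:Fin 4):ℤ) = 0 from rfl, show ((1:Fin 4):ℤ) = 1 from rfl,
    show ((2:Fin 4):ℤ) = 2 from rfl, show ((3:Fin 4):ℤ) = 3 from rfl,
    show ((0:Fin 3):ℤ) = 0 from rfl, show ((1:Fin 3):ℤ) = 1 from rfl,
    show ((2:Fin 3):ℤ) = 2 from rfl,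
    (by decide : ¬(1:Fin 4) = 0), (by decide : ¬(2:Fin 4) = 0), (by decide : ¬(3:Fin 4) = 0),
    show ∀ h, Fin.pred (1:Fin 4) h = (0:Fin 3) from fun _ => rfl,
    show ∀ h, Fin.pred (2:Fin 4) h = (1:Fin 3) from fun _ => rfl,
    show ∀ h, Fin.pred (3:Fin 4) h = (2:Fin 3) from fun _ => rfl] <;> ring

lemma hfsd30 (Jm Jp : Fin 3 → ℝ) : hodge (fromSD Jm Jp) 3 0 = -(Jp 2 + Jm 2) := by
  norm_num (config := { decide := true }) [hodge, fromSD, eps4, eps3, sgnZ, Fin.sum_univ_four, Fin.sum_univ_three,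
    show ((0:Fin 4):ℤ) = 0 from rfl, show ((1:Fin 4):ℤ) = 1 from rfl,
    show ((2:Fin 4):ℤ) = 2 from rfl, show ((3:Fin 4):ℤ) = 3 from rfl,
    show ((0:Fin 3):ℤ) = 0 from rfl, show ((1:Fin 3):ℤ) = 1 from rfl,
    show ((2:Fin 3):ℤ) = 2 from rfl,
    (by decide : ¬(1:Fin 4) = 0), (by decide : ¬(2:Fin 4) = 0), (by decide : ¬(3:Fin 4) = 0),
    show ∀ h, Fin.pred (1:Fin 4) h = (0:Fin 3) from fun _ => rfl,
    show ∀ h, Fin.pred (2:Fin 4) h = (1:Fin 3) from fun _ => rfl,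
    show ∀ h, Fin.pred (3:Fin 4) h = (2:Fin 3) from fun _ => rfl] <;> ring

lemma hfsd31 (Jm Jp : Fin 3 → ℝ) : hodge (fromSD Jm Jp) 3 1 = Jp 1 - Jm 1 := by
  norm_num (config := { decide := true }) [hodge, fromSD, eps4, eps3, sgnZ, Fin.sum_univ_four, Fin.sum_univ_three,
    show ((0:Fin 4):ℤ) = 0 from rfl, show ((1:Fin 4):ℤ) = 1 from rfl,
    show ((2:Fin 4):ℤ) = 2 from rfl, show ((3:Fin 4):ℤ) = 3 from rfl,
    show ((0:Fin 3):ℤ) = 0 from rfl, show ((1:Fin 3):ℤ) = 1 from rfl,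
    show ((2:Fin 3):ℤ) = 2 from rfl,
    (by decide : ¬(1:Fin 4) = 0), (by decide : ¬(2:Fin 4) = 0), (by decide : ¬(3:Fin 4) = 0),
    show ∀ h, Fin.pred (1:Fin 4) h = (0:Fin 3) from fun _ => rfl,
    show ∀ h, Fin.pred (2:Fin 4) h = (1:Fin 3) from fun _ => rfl,
    show ∀ h, Fin.pred (3:Fin 4) h = (2:Fin 3) from fun _ => rfl] <;> ring

lemma hfsd32 (Jm Jp : Fin 3 → ℝ) : hodge (fromSD Jm Jp) 3 2 = -(Jp 0 - Jm 0) := by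
  norm_num (config := { decide := true }) [hodge, fromSD, eps4, eps3, sgnZ, Fin.sum_univ_four, Fin.sum_univ_three,
    show ((0:Fin 4):ℤ) = 0 from rfl, show ((1:Fin 4):ℤ) = 1 from rfl,
    show ((2:Fin 4):ℤ) = 2 from rfl, show ((3:Fin 4):ℤ) = 3 from rfl,
    show ((0:Fin 3):ℤ) = 0 from rfl, show ((1:Fin 3):ℤ) = 1 from rfl,
    show ((2:Fin 3):ℤ) = 2 from rfl,
    (by decide : ¬(1:Fin 4) = 0), (by decide : ¬(2:Fin 4) = 0), (by decide : ¬(3:Fin 4) = 0),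
    show ∀ h, Fin.pred (1:Fin 4) h = (0:Fin 3) from fun _ => rfl,
    show ∀ h, Fin.pred (2:Fin 4) h = (1:Fin 3) from fun _ => rfl,
    show ∀ h, Fin.pred (3:Fin 4) h = (2:Fin 3) from fun _ => rfl] <;> ring

lemma hfsd33 (Jm Jp : Fin 3 → ℝ) : hodge (fromSD Jm Jp) 3 3 = 0 := by
  norm_num (config := { decide := true }) [hodge, fromSD, eps4, eps3, sgnZ, Fin.sum_univ_four, Fin.sum_univ_three,
    show ((0:Fin 4):ℤ) = 0 from rfl, show ((1:Fin 4):ℤ) = 1 from rfl,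
    show ((2:Fin 4):ℤ) = 2 from rfl, show ((3:Fin 4):ℤ) = 3 from rfl,
    show ((0:Fin 3):ℤ) = 0 from rfl, show ((1:Fin 3):ℤ) = 1 from rfl,
    show ((2:Fin 3):ℤ) = 2 from rfl,
    (by decide : ¬(1:Fin 4) = 0), (by decide : ¬(2:Fin 4) = 0), (by decide : ¬(3:Fin 4) = 0),
    show ∀ h, Fin.pred (1:Fin 4) h = (0:Fin 3) from fun _ => rfl,
    show ∀ h, Fin.pred (2:Fin 4) h = (1:Fin 3) from fun _ => rfl,
    show ∀ h, Fin.pred (3:Fin 4) h = (2:Fin 3) from fun _ => rfl] <;> ring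


lemma key_aux (q0 q1 q2 q3 : ℝ) (hq : q0^2+q1^2+q2^2+q3^2 = 1) (c : ℝ) (v w : Fin 3 → ℝ)
    (h0 : w 0 = (q0^2+q1^2-q2^2-q3^2)*v 0 + 2*(q1*q2-q0*q3)*v 1 + 2*(q1*q3+q0*q2)*v 2)
    (h1 : w 1 = 2*(q1*q2+q0*q3)*v 0 + (q0^2-q1^2+q2^2-q3^2)*v 1 + 2*(q2*q3-q0*q1)*v 2)
    (h2 : w 2 = 2*(q1*q3-q0*q2)*v 0 + 2*(q2*q3+q0*q1)*v 1 + (q0^2-q1^2-q2^2+q3^2)*v 2) :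
    ∀ I, ∑ J, hodge (fromSD (fun i => -c * v i) (fun i => c * w i)) I J * ![q0,q1,q2,q3] J = 0 := by
  intro I
  rcases (by decide : ∀ I : Fin 4, I = 0 ∨ I = 1 ∨ I = 2 ∨ I = 3) I with rfl | rfl | rfl | rfl
  · rw [Fin.sum_univ_four, hfsd00, hfsd01, hfsd02, hfsd03]
    simp only [Matrix.cons_val_zero, Matrix.cons_val_one, Matrix.head_cons,
      Matrix.cons_val_two, Matrix.tail_cons, Matrix.cons_val_three]
    linear_combination (c*q1)*h0 + (c*q2)*h1 + (c*q3)*h2 + (c*(q1*v 0+q2*v 1+q3*v 2))*hq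
  · rw [Fin.sum_univ_four, hfsd10, hfsd11, hfsd12, hfsd13]
    simp only [Matrix.cons_val_zero, Matrix.cons_val_one, Matrix.head_cons,
      Matrix.cons_val_two, Matrix.tail_cons, Matrix.cons_val_three]
    linear_combination (-c*q0)*h0 + (-c*q3)*h1 + (c*q2)*h2 + (-c*(q2*v 2 - q3*v 1 + q0*v 0))*hq
  · rw [Fin.sum_univ_four, hfsd20, hfsd21, hfsd22, hfsd23]
    simp only [Matrix.cons_val_zero, Matrix.cons_val_one, Matrix.head_cons,
      Matrix.cons_val_two, Matrix.tail_cons, Matrix.cons_val_three]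
    linear_combination (c*q3)*h0 + (-c*q0)*h1 + (-c*q1)*h2 + (-c*(q3*v 0 - q1*v 2 + q0*v 1))*hq
  · rw [Fin.sum_univ_four, hfsd30, hfsd31, hfsd32, hfsd33]
    simp only [Matrix.cons_val_zero, Matrix.cons_val_one, Matrix.head_cons,
      Matrix.cons_val_two, Matrix.tail_cons, Matrix.cons_val_three]
    linear_combination (-c*q2)*h0 + (c*q1)*h1 + (-c*q0)*h2 + (-c*(q1*v 1 - q2*v 0 + q0*v 2))*hq

lemma mmat_ex (v : Fin 3 → ℝ) : mmat v =
    !![((-(v 2)/2 : ℝ) : ℂ) * Complex.I, ((-(v 0)/2 : ℝ):ℂ) * Complex.I + ((-(v 1)/2:ℝ):ℂ);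
       ((-(v 0)/2:ℝ):ℂ) * Complex.I + (((v 1)/2:ℝ):ℂ), (((v 2)/2:ℝ):ℂ) * Complex.I] := by
  unfold mmat
  rw [Fin.sum_univ_three]
  ext i j
  fin_cases i <;> fin_cases j <;> simp [tau] <;> ring_nf <;> simp [Complex.I_sq] <;> ring

lemma rot_aux (α β : ℂ) (v w : Fin 3 → ℝ)
    (h : mmat w = !![α, β; -(starRingEnd ℂ) β, (starRingEnd ℂ) α] * mmat v *
      !![α, β; -(starRingEnd ℂ) β, (starRingEnd ℂ) α]ᴴ) :
    (w 0 = (α.re^2+β.im^2-β.re^2-α.im^2)*v 0 + 2*(β.im*β.re+α.re*α.im)*v 1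
            + 2*(β.im*α.im-α.re*β.re)*v 2) ∧
    (w 1 = 2*(β.im*β.re-α.re*α.im)*v 0 + (α.re^2-β.im^2+β.re^2-α.im^2)*v 1
            + 2*(β.re*α.im+α.re*β.im)*v 2) ∧
    (w 2 = 2*(β.im*α.im+α.re*β.re)*v 0 + 2*(β.re*α.im-α.re*β.im)*v 1
            + (α.re^2-β.im^2-β.re^2+α.im^2)*v 2) := by
  rw [mmat_ex, mmat_ex] at h
  have h00 := congrFun (congrFun h 0) 0
  have h01 := congrFun (congrFun h 0) 1
  have h10 := congrFun (congrFun h 1) 0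
  simp [Matrix.mul_apply, Fin.sum_univ_two, Matrix.conjTranspose_apply] at h00 h01 h10
  refine ⟨?_, ?_, ?_⟩
  · have := congrArg Complex.im (congrArg₂ (· + ·) h01 h10)
    simp [Complex.add_im, Complex.mul_im, Complex.mul_re] at this
    linarith
  · have := congrArg Complex.re (congrArg₂ (· - ·) h10 h01)
    simp [Complex.sub_re, Complex.mul_im, Complex.mul_re] at this
    linarith
  · have := congrArg Complex.im h00
    simp [Complex.mul_im, Complex.mul_re] at this
    linarith

/-- Suppose the group elements satisfy X⁺_a = ε_a Y X⁻_a (signs ε_a, fixed Y), and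
u^±_{ab} = Ad_{X^±_a}(n_{ab}) satisfy the orientation constraint
u^±_{ab} = −u^±_{ba}.  Then the Spin(4) bivectors
B_{ab} = (A_{ab}/2)(−u⁻_{ab}, u⁺_{ab}), regarded in so(4) via the identification
so(4) ≅ su(2)⊕su(2), admit a common unit vector N ∈ ℝ⁴ with (⋆B_{ab})^{IJ}N_J = 0
for all a ≠ b: they are all simple with respect to the same normal. -/
theorem degenerate_of_equivalent_selfdual_antiselfdual
    (A : Fin 5 → Fin 5 → ℝ) (n : Fin 5 → Fin 5 → Fin 3 → ℝ)
    (Xp Xm : Fin 5 → SU2) (Y : SU2) (ε : Fin 5 → ℝ)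
    (up um : Fin 5 → Fin 5 → Fin 3 → ℝ)
    (hAsymm : ∀ a b, A a b = A b a)
    (hApos : ∀ a b, a ≠ b → 0 < A a b)
    (hε : ∀ a, ε a = 1 ∨ ε a = -1)
    (hXY : ∀ a, (Xp a : Matrix (Fin 2) (Fin 2) ℂ) =
      (ε a : ℂ) • ((Y : Matrix (Fin 2) (Fin 2) ℂ) * (Xm a : Matrix (Fin 2) (Fin 2) ℂ)))
    (hup : ∀ a b, mmat (up a b) =
      (Xp a : Matrix (Fin 2) (Fin 2) ℂ) * mmat (n a b) * (Xp a : Matrix (Fin 2) (Fin 2) ℂ)ᴴ)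
    (hum : ∀ a b, mmat (um a b) =
      (Xm a : Matrix (Fin 2) (Fin 2) ℂ) * mmat (n a b) * (Xm a : Matrix (Fin 2) (Fin 2) ℂ)ᴴ)
    (horientp : ∀ a b, a ≠ b → ∀ i, up a b i = - up b a i)
    (horientm : ∀ a b, a ≠ b → ∀ i, um a b i = - um b a i) :
    ∃ N : Fin 4 → ℝ, (∑ I, N I ^ 2 = 1) ∧
      ∀ a b, a ≠ b → ∀ I, ∑ J,
        hodge (fromSD (fun i => -(A a b / 2) * um a b i)
                      (fun i => (A a b / 2) * up a b i)) I J * N J = 0 := by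
  obtain ⟨hu, hdet⟩ := Matrix.mem_specialUnitaryGroup_iff.mp Y.2
  set M : Matrix (Fin 2) (Fin 2) ℂ := (Y : Matrix (Fin 2) (Fin 2) ℂ) with hM
  have h1 : M * star M = 1 := (Matrix.mem_unitaryGroup_iff).mp hu
  have h2 : star M * M = 1 := (Matrix.mem_unitaryGroup_iff').mp hu
  have hinv : M⁻¹ = star M := Matrix.inv_eq_left_inv h2
  have hadj : M⁻¹ = M.adjugate := by
    rw [Matrix.inv_def, hdet]
    simp
  have hstar : star M = M.adjugate := by rw [← hinv, hadj]
  have e11 : M 1 1 = (starRingEnd ℂ) (M 0 0) := by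
    have := congrFun (congrFun hstar 0) 0
    simp [Matrix.star_apply, Matrix.adjugate_fin_two] at this
    exact this.symm
  have e10 : M 1 0 = -(starRingEnd ℂ) (M 0 1) := by
    have := congrFun (congrFun hstar 1) 0
    simp [Matrix.star_apply, Matrix.adjugate_fin_two] at this
    rw [show M 1 0 = (starRingEnd ℂ) ((starRingEnd ℂ) (M 1 0)) by simp, this]
    simp
  have hnorm : M 0 0 * (starRingEnd ℂ) (M 0 0) + M 0 1 * (starRingEnd ℂ) (M 0 1) = 1 := by
    have := congrFun (congrFun h1 0) 0
    simpa [Matrix.mul_apply, Fin.sum_univ_two, Matrix.star_apply, Matrix.one_apply] using this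
  have norm1 : (M 0 0).re^2 + (M 0 0).im^2 + (M 0 1).re^2 + (M 0 1).im^2 = 1 := by
    have := congrArg Complex.re hnorm
    simp [Complex.mul_re] at this
    linarith [this]
  have heta : M = !![M 0 0, M 0 1; -(starRingEnd ℂ) (M 0 1), (starRingEnd ℂ) (M 0 0)] := by
    rw [← e10, ← e11]
    exact Matrix.etaExpand_eq M |>.symm
  set α : ℂ := M 0 0
  set β : ℂ := M 0 1
  have hrel : ∀ a b, mmat (up a b) =
      !![α, β; -(starRingEnd ℂ) β, (starRingEnd ℂ) α] * mmat (um a b) *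
      !![α, β; -(starRingEnd ℂ) β, (starRingEnd ℂ) α]ᴴ := by
    intro a b
    have hε2 : (ε a : ℂ) * (starRingEnd ℂ) (ε a : ℂ) = 1 := by
      rw [Complex.conj_ofReal]
      rcases hε a with h | h <;> rw [h] <;> norm_num
    calc mmat (up a b)
        = (Xp a : Matrix (Fin 2) (Fin 2) ℂ) * mmat (n a b)
            * (Xp a : Matrix (Fin 2) (Fin 2) ℂ)ᴴ := hup a b
      _ = ((ε a : ℂ) • ((Y : Matrix (Fin 2) (Fin 2) ℂ) * (Xm a : Matrix (Fin 2) (Fin 2) ℂ)))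
            * mmat (n a b)
            * ((ε a : ℂ) • ((Y : Matrix (Fin 2) (Fin 2) ℂ)
                * (Xm a : Matrix (Fin 2) (Fin 2) ℂ)))ᴴ := by rw [← hXY a]
      _ = ((ε a : ℂ) * (starRingEnd ℂ) (ε a : ℂ)) •
            (M * ((Xm a : Matrix (Fin 2) (Fin 2) ℂ) * mmat (n a b)
              * (Xm a : Matrix (Fin 2) (Fin 2) ℂ)ᴴ) * Mᴴ) := by
        rw [Matrix.conjTranspose_smul, Matrix.conjTranspose_mul]
        rw [Matrix.smul_mul, Matrix.smul_mul, Matrix.mul_smul, smul_smul]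
        rw [← hM]
        ring_nf
        simp [Matrix.mul_assoc, Complex.star_def]
      _ = M * ((Xm a : Matrix (Fin 2) (Fin 2) ℂ) * mmat (n a b)
              * (Xm a : Matrix (Fin 2) (Fin 2) ℂ)ᴴ) * Mᴴ := by rw [hε2, one_smul]
      _ = M * mmat (um a b) * Mᴴ := by rw [← hum a b]
      _ = _ := by rw [heta]
  refine ⟨![α.re, -β.im, -β.re, -α.im], ?_, ?_⟩
  · rw [Fin.sum_univ_four]
    simp only [Matrix.cons_val_zero, Matrix.cons_val_one, Matrix.head_cons,
      Matrix.cons_val_two, Matrix.tail_cons, Matrix.cons_val_three]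
    linear_combination norm1
  · intro a b hab I
    obtain ⟨r0, r1, r2⟩ := rot_aux α β (um a b) (up a b) (hrel a b)
    refine key_aux α.re (-β.im) (-β.re) (-α.im) (by linear_combination norm1)
      (A a b / 2) (um a b) (up a b) ?_ ?_ ?_ I
    · linear_combination r0
    · linear_combination r1
    · linear_combination r2
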